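/- Let d ≥ 1, let λ ≥ 2 be a real number, and let b : Fin (d+1) → ℕ be any map. Let A be the (d+1)×(d+1) real matrix with A i i = 0, A i j = 1 for i ≠ j with b i = b j, and A i j = λ² for b i ≠ b j, and let Ā be the (d+2)×(d+2) matrix obtained by bordering A with a new first row and first column both equal to (0, 1, 1, …, 1). Then (−1)^{d+1} · (λ² · det Ā + det A) > 0. -/

import Mathlib

open Matrix Finset

/-- If the first row of a bordered matrix is `(1,0,…,0)`, its determinant equals the
determinant of the lower-right block. -/
lemma aux_border {n : ℕ} (B : Matrix (Fin (n + 1)) (Fin (n + 1)) ℝ) (h0 : B 0 0 = 1)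
    (hr : ∀ j : Fin n, B 0 j.succ = 0) :
    B.det = (B.submatrix Fin.succ Fin.succ).det := by
  rw [Matrix.det_succ_row_zero, Fin.sum_univ_succ]
  simp [hr, h0]

theorem stmt_6 (d : ℕ) (hd : 1 ≤ d) (lam : ℝ) (hlam : 2 ≤ lam)
    (b : Fin (d + 1) → ℕ)
    (A : Matrix (Fin (d + 1)) (Fin (d + 1)) ℝ)
    (hA : ∀ i j, A i j = if i = j then 0 else if b i = b j then 1 else lam ^ 2)
    (Abar : Matrix (Fin (d + 2)) (Fin (d + 2)) ℝ)
    (hbar00 : Abar 0 0 = 0)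
    (hbar0row : ∀ j : Fin (d + 1), Abar 0 j.succ = 1)
    (hbar0col : ∀ i : Fin (d + 1), Abar i.succ 0 = 1)
    (hbarA : ∀ i j : Fin (d + 1), Abar i.succ j.succ = A i j) :
    (-1 : ℝ) ^ (d + 1) * (lam ^ 2 * Abar.det + A.det) > 0 := by
  have hl1 : (0 : ℝ) ≤ lam ^ 2 - 1 := by nlinarith
  -- S : block indicator matrix
  set S : Matrix (Fin (d + 1)) (Fin (d + 1)) ℝ :=
    Matrix.of fun i j => if b i = b j then (1 : ℝ) else 0 with hS
  set P : Matrix (Fin (d + 1)) (Fin (d + 1)) ℝ := 1 + (lam ^ 2 - 1) • S with hPdef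
  -- P is positive definite
  have hP : P.PosDef := by
    rw [Matrix.posDef_iff_dotProduct_mulVec]
    constructor
    · apply Matrix.ext
      intro i j
      simp only [hPdef, Matrix.conjTranspose_apply, Matrix.add_apply, Matrix.smul_apply,
        Matrix.one_apply, hS, Matrix.of_apply, star_trivial, smul_eq_mul]
      by_cases h1 : i = j <;> by_cases h2 : b i = b j <;>
        simp [h1, h2, eq_comm, Ne.symm]
    · intro x hx
      have hxx : 0 < x ⬝ᵥ x := by
        have h1 : x ⬝ᵥ x = ∑ i, x i ^ 2 := by
          simp [dotProduct, sq]
        rw [h1]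
        obtain ⟨i0, hi0⟩ : ∃ i, x i ≠ 0 := Function.ne_iff.mp hx
        exact Finset.sum_pos' (fun i _ => sq_nonneg _)
          ⟨i0, Finset.mem_univ _, by positivity⟩
      have hQ : 0 ≤ x ⬝ᵥ (S *ᵥ x) := by
        set g : ℕ → ℝ := fun c => ∑ i ∈ Finset.univ.filter (fun i => b i = c), x i with hg
        have h1 : x ⬝ᵥ (S *ᵥ x) = ∑ i, x i * g (b i) := by
          apply Finset.sum_congr rfl
          intro i _
          have : (S *ᵥ x) i = g (b i) := by
            rw [hg]
            simp only [Matrix.mulVec, dotProduct, hS, Matrix.of_apply]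
            rw [Finset.sum_filter]
            apply Finset.sum_congr rfl
            intro j _
            by_cases h : b i = b j <;> simp [h, eq_comm]
          rw [this]
        rw [h1, ← Finset.sum_fiberwise_of_maps_to (g := b) (t := Finset.univ.image b)
          (fun i _ => Finset.mem_image_of_mem b (Finset.mem_univ i))]
        apply Finset.sum_nonneg
        intro c _
        have h2 : ∑ i ∈ Finset.univ.filter (fun i => b i = c), x i * g (b i) = g c * g c := by
          have he : ∑ i ∈ Finset.univ.filter (fun i => b i = c), x i * g (b i)
              = ∑ i ∈ Finset.univ.filter (fun i => b i = c), x i * g c :=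
            Finset.sum_congr rfl (fun i hi => by rw [(Finset.mem_filter.mp hi).2])
          rw [he, ← Finset.sum_mul]
        rw [h2]
        exact mul_self_nonneg _
      have hPx : x ⬝ᵥ (P *ᵥ x) = x ⬝ᵥ x + (lam ^ 2 - 1) * (x ⬝ᵥ (S *ᵥ x)) := by
        rw [hPdef, Matrix.add_mulVec, Matrix.one_mulVec, Matrix.smul_mulVec,
          dotProduct_add, dotProduct_smul, smul_eq_mul]
      simp only [star_trivial]
      rw [hPx]
      positivity
  -- key determinant identity: lam² det Ā + det A = det (-P)
  have key : lam ^ 2 * Abar.det + A.det = (-P).det := by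
    set r : Fin (d + 2) → ℝ := lam ^ 2 • Abar 0 + Pi.single 0 1 with hr
    set N : Matrix (Fin (d + 2)) (Fin (d + 2)) ℝ := Abar.updateRow 0 r with hN
    have hN00 : N 0 0 = 1 := by
      simp [hN, hr, Matrix.updateRow_self, hbar00]
    have hN0s : ∀ j : Fin (d + 1), N 0 j.succ = lam ^ 2 := by
      intro j
      simp [hN, hr, Matrix.updateRow_self, hbar0row j,
        Pi.single_eq_of_ne (Fin.succ_ne_zero j)]
    have hNs0 : ∀ i : Fin (d + 1), N i.succ 0 = 1 := by
      intro i
      rw [hN, Matrix.updateRow_ne (Fin.succ_ne_zero i)]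
      exact hbar0col i
    have hNss : ∀ i j : Fin (d + 1), N i.succ j.succ = A i j := by
      intro i j
      rw [hN, Matrix.updateRow_ne (Fin.succ_ne_zero i)]
      exact hbarA i j
    have hdetN : N.det = lam ^ 2 * Abar.det + A.det := by
      rw [hN, hr, Matrix.det_updateRow_add, Matrix.det_updateRow_smul,
        Matrix.updateRow_eq_self]
      congr 1
      rw [aux_border _ (by simp [Matrix.updateRow_self])
        (fun j => by simp [Matrix.updateRow_self, Pi.single_eq_of_ne (Fin.succ_ne_zero j)])]
      congr 1
      apply Matrix.ext
      intro i j
      rw [Matrix.submatrix_apply, Matrix.updateRow_ne (Fin.succ_ne_zero i)]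
      exact hbarA i j
    set V : Matrix (Fin (d + 2)) (Fin (d + 2)) ℝ :=
      Matrix.of (fun k j => if k = 0 ∧ j ≠ 0 then -lam ^ 2 else 0) with hV
    set U : Matrix (Fin (d + 2)) (Fin (d + 2)) ℝ := 1 + V with hU
    have hdetU : U.det = 1 := by
      rw [Matrix.det_of_upperTriangular (M := U) ?_]
      · apply Finset.prod_eq_one
        intro i _
        simp [hU, hV, Matrix.one_apply]
      · intro i j hij
        have hij' : j < i := hij
        have h1 : i ≠ j := ne_of_gt hij'
        have h2 : i ≠ 0 := by
          intro h
          subst h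
          exact absurd hij' (Fin.not_lt_zero j)
        simp [hU, hV, Matrix.one_apply, h1, h2]
    have hNV : ∀ i j, (N * V) i j = N i 0 * V 0 j := by
      intro i j
      rw [Matrix.mul_apply]
      apply Finset.sum_eq_single 0
      · intro k _ hk
        have hvk : V k j = 0 := by simp [hV, hk]
        rw [hvk, mul_zero]
      · intro h
        exact absurd (Finset.mem_univ 0) h
    have hNU : N * U = N + N * V := by
      rw [hU, Matrix.mul_add, Matrix.mul_one]
    have e00 : (N * U) 0 0 = 1 := by
      rw [hNU, Matrix.add_apply, hNV, hN00]
      simp [hV]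
    have e0s : ∀ j : Fin (d + 1), (N * U) 0 j.succ = 0 := by
      intro j
      have hv : V 0 j.succ = -lam ^ 2 := by simp [hV, Fin.succ_ne_zero j]
      rw [hNU, Matrix.add_apply, hNV, hN00, hN0s j, hv]
      ring
    have ess : ∀ i j : Fin (d + 1), (N * U) i.succ j.succ = A i j - lam ^ 2 := by
      intro i j
      have hv : V 0 j.succ = -lam ^ 2 := by simp [hV, Fin.succ_ne_zero j]
      rw [hNU, Matrix.add_apply, hNV, hNs0 i, hNss i j, hv]
      ring
    calc lam ^ 2 * Abar.det + A.det = N.det := hdetN.symm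
      _ = N.det * U.det := by rw [hdetU, mul_one]
      _ = (N * U).det := (Matrix.det_mul N U).symm
      _ = ((N * U).submatrix Fin.succ Fin.succ).det := aux_border _ e00 e0s
      _ = (-P).det := by
          congr 1
          apply Matrix.ext
          intro i j
          rw [Matrix.submatrix_apply, ess i j, hA i j]
          simp only [hPdef, hS, Matrix.neg_apply, Matrix.add_apply, Matrix.smul_apply,
            Matrix.one_apply, Matrix.of_apply, smul_eq_mul]
          by_cases h1 : i = j
          · subst h1
            simp
          · by_cases h2 : b i = b j <;> simp [h1, h2] <;> ring
  rw [gt_iff_lt, key, Matrix.det_neg, Fintype.card_fin]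
  have hsq : ((-1 : ℝ)) ^ (d + 1) * (-1) ^ (d + 1) = 1 := by
    rw [← pow_add]
    exact Even.neg_one_pow ⟨d + 1, rfl⟩
  rw [← mul_assoc, hsq, one_mul]
  exact hP.det_pos
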